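/- Fix a positive integer L and define p(r) = 1/√(⌊r/L⌋+1) for integers r ≥ 0. Let k ≥ 1 be an integer, α ∈ (0,1], ε > 0, and c > 0 be such that m1 := (c/64)k² and m2 := (c/α^{2+ε})k² are positive integers. If q is a real-valued function on the positions r with m1·L ≤ r < (m2+1)·L satisfying q(r) > (α^{1+ε/2}/(√c·k))·ln(4/α) for every such r, then ∑_{r=m1·L}^{(m2+1)·L − 1} p(r)·q(r) > (L·ln(4/α))/2. -/

import Mathlib

/-- Probability of a one at position `r` in the random matrix construction with block
length `L`: `p(r) = 1/√(⌊r/L⌋+1)` (natural-number division is floor division). -/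
noncomputable def pval (L r : ℕ) : ℝ := 1 / Real.sqrt (((r / L : ℕ) : ℝ) + 1)

set_option maxHeartbeats 1000000 in
/-- Case 1 lower bound: if `q(r) > (α^{1+ε/2}/(√c·k))·ln(4/α)` on all positions of
the lower segment `[m1·L, (m2+1)·L)`, then `∑ p(r)·q(r) > L·ln(4/α)/2`. -/
theorem stmt8 (L : ℕ) (hL : 0 < L) (k : ℕ) (hk : 1 ≤ k) (α ε c : ℝ)
    (hα0 : 0 < α) (hα1 : α ≤ 1) (hε : 0 < ε) (hc : 0 < c)
    (m1 m2 : ℕ) (hm1 : 0 < m1) (hm2 : 0 < m2)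
    (hm1c : (m1 : ℝ) = c / 64 * (k : ℝ) ^ 2)
    (hm2c : (m2 : ℝ) = c / α ^ ((2 : ℝ) + ε) * (k : ℝ) ^ 2)
    (q : ℕ → ℝ)
    (hq : ∀ r : ℕ, m1 * L ≤ r → r < (m2 + 1) * L →
      α ^ ((1 : ℝ) + ε / 2) / (Real.sqrt c * (k : ℝ)) * Real.log (4 / α) < q r) :
    (L : ℝ) * Real.log (4 / α) / 2
      < ∑ r ∈ Finset.Ico (m1 * L) ((m2 + 1) * L), pval L r * q r := by
  set A : ℝ := α ^ ((1 : ℝ) + ε / 2) with hAdef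
  set T : ℝ := Real.log (4 / α) with hTdef
  have hk' : (0:ℝ) < k := by exact_mod_cast hk
  have hL' : (0:ℝ) < L := by exact_mod_cast hL
  have hm2' : (1:ℝ) ≤ m2 := by exact_mod_cast hm2
  have hA0 : 0 < A := Real.rpow_pos_of_pos hα0 _
  have hA2 : A * A = α ^ ((2:ℝ) + ε) := by
    rw [hAdef, ← Real.rpow_add hα0]; ring_nf
  have hαe : (0:ℝ) < α ^ ((2:ℝ) + ε) := Real.rpow_pos_of_pos hα0 _
  have hαe1 : α ^ ((2:ℝ) + ε) ≤ 1 := Real.rpow_le_one hα0.le hα1 (by linarith)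
  have hT : 0 < T := Real.log_pos (by rw [lt_div_iff₀ hα0]; linarith)
  have hsc : 0 < Real.sqrt c := Real.sqrt_pos.mpr hc
  -- m1 ≤ m2/64
  have hm1le : (m1:ℝ) ≤ (m2:ℝ) / 64 := by
    rw [hm1c, hm2c]
    have hk2 : (0:ℝ) ≤ (k:ℝ)^2 := sq_nonneg _
    have hcc : c ≤ c / α ^ ((2:ℝ) + ε) := by
      rw [le_div_iff₀ hαe]; nlinarith
    nlinarith
  have hm1m2 : m1 ≤ m2 := by
    have : (m1:ℝ) ≤ (m2:ℝ) := by linarith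
    exact_mod_cast this
  -- s = sqrt(m2+1)
  set s : ℝ := Real.sqrt ((m2:ℝ) + 1) with hsdef
  have hs : 0 < s := Real.sqrt_pos.mpr (by linarith)
  have hsqm2 : Real.sqrt (m2:ℝ) = Real.sqrt c * k / A := by
    have hm2sq : (m2:ℝ) = (Real.sqrt c * k / A)^2 := by
      have hc2 : Real.sqrt c ^ 2 = c := Real.sq_sqrt hc.le
      rw [div_pow, mul_pow, hc2, show A^2 = α ^ ((2:ℝ)+ε) from by rw [sq]; exact hA2,
        hm2c]; ring
    rw [hm2sq, Real.sqrt_sq (by positivity)]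
  have hs2 : s ≤ Real.sqrt 2 * (Real.sqrt c * k / A) := by
    rw [hsdef, ← hsqm2, ← Real.sqrt_mul (by norm_num : (0:ℝ) ≤ 2)]
    exact Real.sqrt_le_sqrt (by linarith)
  have hsqrt2 : Real.sqrt 2 < 63/32 := by
    rw [show (63:ℝ)/32 = Real.sqrt ((63/32)^2) from (Real.sqrt_sq (by norm_num)).symm]
    exact Real.sqrt_lt_sqrt (by norm_num) (by norm_num)
  -- key inequality
  have key : Real.sqrt c * k * s < 2 * A * ((m2:ℝ) + 1 - m1) := by
    have h1 : Real.sqrt c * k * s ≤ Real.sqrt c * k * (Real.sqrt 2 * (Real.sqrt c * k / A)) :=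
      mul_le_mul_of_nonneg_left hs2 (by positivity)
    have hm : (m2:ℝ) * (A * A) = c * (k:ℝ)^2 := by
      rw [hA2, hm2c]; field_simp
    have h2 : Real.sqrt c * k * (Real.sqrt 2 * (Real.sqrt c * k / A)) = Real.sqrt 2 * ((m2:ℝ) * A) := by
      have hc2 : Real.sqrt c * Real.sqrt c = c := Real.mul_self_sqrt hc.le
      field_simp
      linear_combination (k:ℝ)^2 * hc2 - hm
    have h3 : Real.sqrt 2 * ((m2:ℝ) * A) < 2 * A * ((m2:ℝ) + 1 - m1) := by
      nlinarith [mul_lt_mul_of_pos_right hsqrt2 (mul_pos (by linarith : (0:ℝ) < m2) hA0),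
        mul_le_mul_of_nonneg_left hm1le hA0.le, hA0]
    calc Real.sqrt c * k * s ≤ _ := h1
      _ = Real.sqrt 2 * ((m2:ℝ) * A) := h2
      _ < _ := h3
  -- pointwise lower bound on the sum
  have hβT : 0 < A / (Real.sqrt c * k) * T :=
    mul_pos (div_pos hA0 (mul_pos hsc hk')) hT
  have hlow : ∀ r ∈ Finset.Ico (m1 * L) ((m2 + 1) * L),
      (1/s) * (A / (Real.sqrt c * k) * T) < pval L r * q r := by
    intro r hr
    obtain ⟨hr1, hr2⟩ := Finset.mem_Ico.mp hr
    have hdiv : r / L ≤ m2 := Nat.lt_succ_iff.mp ((Nat.div_lt_iff_lt_mul hL).mpr hr2)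
    have hp : 1/s ≤ pval L r := by
      unfold pval
      apply one_div_le_one_div_of_le
      · positivity
      · exact Real.sqrt_le_sqrt (by exact_mod_cast Nat.succ_le_succ hdiv)
    have hq' := hq r hr1 hr2
    have hp0 : 0 < pval L r := by unfold pval; positivity
    calc (1/s) * (A / (Real.sqrt c * k) * T)
        ≤ pval L r * (A / (Real.sqrt c * k) * T) := mul_le_mul_of_nonneg_right hp hβT.le
      _ < pval L r * q r := mul_lt_mul_of_pos_left hq' hp0
  have hne : (Finset.Ico (m1 * L) ((m2 + 1) * L)).Nonempty :=
    Finset.nonempty_Ico.mpr ((Nat.mul_lt_mul_right hL).mpr (Nat.lt_succ_of_le hm1m2))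
  have hsum : ((Finset.Ico (m1 * L) ((m2 + 1) * L)).card : ℝ)
      * ((1/s) * (A / (Real.sqrt c * k) * T))
      < ∑ r ∈ Finset.Ico (m1 * L) ((m2 + 1) * L), pval L r * q r := by
    have := Finset.sum_lt_sum_of_nonempty hne hlow
    simpa [Finset.sum_const, nsmul_eq_mul] using this
  have hcard : ((Finset.Ico (m1 * L) ((m2 + 1) * L)).card : ℝ)
      = ((m2:ℝ) + 1) * L - (m1:ℝ) * L := by
    rw [Nat.card_Ico, Nat.cast_sub (Nat.mul_le_mul_right L (Nat.le_succ_of_le hm1m2))]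
    push_cast; ring
  rw [hcard] at hsum
  -- final arithmetic
  have hD : 0 < s * (Real.sqrt c * k) := by positivity
  have hmain : (L:ℝ) * T / 2 * (s * (Real.sqrt c * k))
      < (((m2:ℝ) + 1) * L - (m1:ℝ) * L) * (A * T) := by
    nlinarith [mul_lt_mul_of_pos_left key (half_pos (mul_pos hL' hT))]
  have hfin : (L:ℝ) * T / 2
      < (((m2:ℝ) + 1) * L - (m1:ℝ) * L) * ((1/s) * (A / (Real.sqrt c * k) * T)) := by
    have heq : (((m2:ℝ) + 1) * L - (m1:ℝ) * L) * ((1/s) * (A / (Real.sqrt c * k) * T))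
        = ((((m2:ℝ) + 1) * L - (m1:ℝ) * L) * (A * T)) / (s * (Real.sqrt c * k)) := by
      field_simp
    rw [heq]
    exact (lt_div_iff₀ hD).mpr hmain
  linarith
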